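/- Let A be a commutative semiring. Every finitely presented flat A-module is projective, and (Lazard) an A-module is flat if and only if it is a filtered colimit of finite free A-modules. -/

import Mathlib

open TensorProduct

/-- Flatness of a semimodule `M` over a commutative semiring `A`: the functor
`- ⊗[A] M` preserves equalizers. -/
def TensorFlat (A : Type) [CommSemiring A] (M : Type) [AddCommMonoid M]
    [Module A M] : Prop :=
  ∀ (N P : Type) [AddCommMonoid N] [AddCommMonoid P] [Module A N] [Module A P]
    (f g : N →ₗ[A] P),
    Function.Injective
      (LinearMap.rTensor M (LinearMap.eqLocus f g).subtype) ∧
    LinearMap.range (LinearMap.rTensor M (LinearMap.eqLocus f g).subtype) =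
      LinearMap.eqLocus (LinearMap.rTensor M f) (LinearMap.rTensor M g)

/-- Projectivity: a retract of a free semimodule. -/
def IsProjSemimodule (A : Type) [CommSemiring A] (M : Type) [AddCommMonoid M]
    [Module A M] : Prop :=
  ∃ (I : Type) (s : M →ₗ[A] (I →₀ A)) (r : (I →₀ A) →ₗ[A] M), ∀ x, r (s x) = x

/-- Finite presentation: `M` is the coequalizer of a pair of maps between finite
free semimodules, i.e. the quotient of `Aⁿ` by the (additive, automatically
`A`-linear) congruence generated by the pairs `(f z, g z)`. -/
def IsFPSemimodule (A : Type) [CommSemiring A] (M : Type) [AddCommMonoid M]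
    [Module A M] : Prop :=
  ∃ (n m : ℕ) (f g : (Fin m → A) →ₗ[A] (Fin n → A)) (p : (Fin n → A) →ₗ[A] M),
    Function.Surjective p ∧
    ∀ x y : Fin n → A,
      p x = p y ↔ addConGen (fun u v => ∃ z, u = f z ∧ v = g z) x y

/-- `M` is a filtered colimit of finite free semimodules: there is a directed
system of finite free modules with compatible maps to `M` which is jointly
surjective and detects equality eventually. -/
def IsFilteredColimFinFree (A : Type) [CommSemiring A] (M : Type) [AddCommMonoid M]
    [Module A M] : Prop :=
  ∃ (ι : Type) (inst : Preorder ι), haveI := inst;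
    Nonempty ι ∧ (∀ i j : ι, ∃ k, i ≤ k ∧ j ≤ k) ∧
    ∃ (n : ι → ℕ)
      (T : ∀ i j : ι, i ≤ j → ((Fin (n i) → A) →ₗ[A] (Fin (n j) → A)))
      (c : ∀ i : ι, (Fin (n i) → A) →ₗ[A] M),
      (∀ (i : ι) (h : i ≤ i), T i i h = LinearMap.id) ∧
      (∀ (i j k : ι) (hij : i ≤ j) (hjk : j ≤ k),
        (T j k hjk) ∘ₗ (T i j hij) = T i k (le_trans hij hjk)) ∧
      (∀ (i j : ι) (hij : i ≤ j), (c j) ∘ₗ (T i j hij) = c i) ∧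
      (∀ x : M, ∃ (i : ι) (y : Fin (n i) → A), c i y = x) ∧
      (∀ (i : ι) (x y : Fin (n i) → A), c i x = c i y →
        ∃ (j : ι) (h : i ≤ j), T i j h x = T i j h y)


namespace Stmt12Aux

variable {A : Type} [CommSemiring A] {M : Type} [AddCommMonoid M] [Module A M]

noncomputable section

def dotp {n : ℕ} (a b : Fin n → A) : A := ∑ i, a i * b i

lemma dotp_add_right {n : ℕ} (a b c : Fin n → A) : dotp a (b + c) = dotp a b + dotp a c := by
  simp [dotp, mul_add, Finset.sum_add_distrib]

lemma dotp_smul_right {n : ℕ} (r : A) (a b : Fin n → A) : dotp a (r • b) = r * dotp a b := by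
  simp [dotp, Finset.mul_sum]; congr 1; funext i; ring

def ee {n : ℕ} (j : Fin n) : Fin n → A := Pi.single j 1

lemma single_eq_smul_ee {n : ℕ} (j : Fin n) (r : A) :
    (Pi.single j r : Fin n → A) = r • (ee j : Fin n → A) := by
  funext i; by_cases h : i = j <;> simp [ee, Pi.single_apply, h]

lemma dotp_ee_right {n : ℕ} (a : Fin n → A) (i : Fin n) :
    dotp a (ee i) = a i := by
  classical
  rw [dotp, Finset.sum_eq_single i]
  · simp [ee]
  · intro j _ hj; simp [ee, Pi.single_apply, hj]
  · simp

lemma dotp_ee_left {n : ℕ} (a : Fin n → A) (i : Fin n) :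
    dotp (ee i) a = a i := by
  classical
  rw [dotp, Finset.sum_eq_single i]
  · simp [ee]
  · intro j _ hj; simp [ee, Pi.single_apply, hj]
  · simp

lemma sum_ee_smul {n : ℕ} (y : Fin n → A) : ∑ j, y j • (ee j : Fin n → A) = y := by
  classical
  funext i
  rw [Finset.sum_apply, Finset.sum_eq_single i]
  · simp [ee]
  · intro j _ hj
    simp [ee, Pi.single_apply, Ne.symm hj]
  · simp

/-- transpose of a linear map between finite free modules -/
def trans {n m : ℕ} (φ : (Fin m → A) →ₗ[A] (Fin n → A)) :
    (Fin n → A) →ₗ[A] (Fin m → A) where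
  toFun x := fun j => dotp (φ (ee j)) x
  map_add' x y := by funext j; simp [dotp_add_right]
  map_smul' r x := by funext j; simp [dotp_smul_right]

lemma trans_apply {n m : ℕ} (φ : (Fin m → A) →ₗ[A] (Fin n → A)) (x : Fin n → A)
    (j : Fin m) : trans φ x j = dotp (φ (ee j)) x := rfl

lemma dotp_trans {n m : ℕ} (φ : (Fin m → A) →ₗ[A] (Fin n → A)) (y : Fin m → A)
    (x : Fin n → A) : dotp (φ y) x = dotp y (trans φ x) := by
  classical
  conv_lhs => rw [← sum_ee_smul y]
  rw [map_sum]
  have : dotp (∑ j, φ (y j • ee j)) x = ∑ j, dotp (φ (y j • ee j)) x := by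
    simp only [dotp, Finset.sum_apply, Finset.sum_mul]
    rw [Finset.sum_comm]
  rw [this]
  rw [dotp]
  congr 1; funext j
  rw [map_smul]
  have h1 : dotp (y j • φ (ee j)) x = y j * dotp (φ (ee j)) x := by
    simp [dotp, Finset.mul_sum]; congr 1; funext i; ring
  rw [h1, trans_apply]

/-- every element of a tensor product is a finite sum of simple tensors -/
lemma exists_fin_sum {N P : Type} [AddCommMonoid N] [AddCommMonoid P] [Module A N]
    [Module A P] (t : N ⊗[A] P) :
    ∃ (k : ℕ) (x : Fin k → N) (y : Fin k → P), t = ∑ s, x s ⊗ₜ[A] y s := by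
  induction t with
  | zero => exact ⟨0, Fin.elim0, Fin.elim0, by simp⟩
  | tmul a b => exact ⟨1, fun _ => a, fun _ => b, by simp⟩
  | add u v hu hv =>
      obtain ⟨k, x, y, rfl⟩ := hu
      obtain ⟨k', x', y', rfl⟩ := hv
      refine ⟨k + k', Fin.append x x', Fin.append y y', ?_⟩
      rw [Fin.sum_univ_add]
      simp [Fin.append_left, Fin.append_right]

/-- the "coordinates" map  W ⊗ A^n → (Fin n → W)  -/
def coords {n : ℕ} (W : Type) [AddCommMonoid W] [Module A W] :
    (W ⊗[A] (Fin n → A)) →ₗ[A] (Fin n → W) :=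
  TensorProduct.lift (LinearMap.mk₂ A (fun w x => fun s => x s • w)
    (fun w w' x => by funext s; simp [smul_add])
    (fun r w x => by funext s; show x s • (r • w) = r • (x s • w); rw [smul_comm])
    (fun w x x' => by funext s; simp [add_smul])
    (fun r w x => by funext s; show (r • x) s • w = r • (x s • w); simp [mul_smul]))

@[simp] lemma coords_tmul {n : ℕ} {W : Type} [AddCommMonoid W] [Module A W]
    (w : W) (x : Fin n → A) (s : Fin n) : coords W (w ⊗ₜ[A] x) s = x s • w := rfl

lemma coords_reconstruct {n : ℕ} {W : Type} [AddCommMonoid W] [Module A W]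
    (t : W ⊗[A] (Fin n → A)) :
    t = ∑ s, coords W t s ⊗ₜ[A] (ee s : Fin n → A) := by
  classical
  induction t with
  | zero => simp
  | tmul w x =>
      have h1 : ∀ s : Fin n, (x s • w) ⊗ₜ[A] (ee s : Fin n → A)
          = w ⊗ₜ[A] (x s • (ee s : Fin n → A)) := by
        intro s; rw [TensorProduct.smul_tmul]
      simp only [coords_tmul, h1]
      rw [← TensorProduct.tmul_sum, sum_ee_smul]
  | add u v hu hv =>
      conv_lhs => rw [hu, hv]
      rw [← Finset.sum_add_distrib]
      simp [TensorProduct.add_tmul]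

lemma coords_injective {n : ℕ} {W : Type} [AddCommMonoid W] [Module A W] :
    Function.Injective (coords (A := A) (n := n) W) := by
  intro t t' h
  rw [coords_reconstruct t, coords_reconstruct t', h]

lemma coords_rTensor {n : ℕ} {W W' : Type} [AddCommMonoid W] [AddCommMonoid W']
    [Module A W] [Module A W'] (g : W →ₗ[A] W') (t : W ⊗[A] (Fin n → A)) (s : Fin n) :
    coords W' (LinearMap.rTensor _ g t) s = g (coords W t s) := by
  induction t with
  | zero => simp
  | tmul w x => simp
  | add u v hu hv => simp [map_add, hu, hv]


/-- left coordinates map A^n ⊗ M → (Fin n → M) -/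
def coordsL {n : ℕ} (W : Type) [AddCommMonoid W] [Module A W] :
    ((Fin n → A) ⊗[A] W) →ₗ[A] (Fin n → W) :=
  TensorProduct.lift (LinearMap.mk₂ A (fun x w => fun s => x s • w)
    (fun x x' w => by funext s; simp [add_smul])
    (fun r x w => by funext s; show (r • x) s • w = r • (x s • w); simp [mul_smul])
    (fun x w w' => by funext s; simp [smul_add])
    (fun r x w => by funext s; show x s • (r • w) = r • (x s • w); rw [smul_comm]))

@[simp] lemma coordsL_tmul {n : ℕ} {W : Type} [AddCommMonoid W] [Module A W]
    (x : Fin n → A) (w : W) (s : Fin n) : coordsL W (x ⊗ₜ[A] w) s = x s • w := rfl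

/-- the canonical element ∑ eᵢ ⊗ u(eᵢ) -/
def can {n : ℕ} (u : (Fin n → A) →ₗ[A] M) : (Fin n → A) ⊗[A] M :=
  ∑ i, (ee i : Fin n → A) ⊗ₜ[A] u (ee i)

lemma rTensor_trans_can {n m : ℕ} (φ : (Fin m → A) →ₗ[A] (Fin n → A))
    (u : (Fin n → A) →ₗ[A] M) :
    LinearMap.rTensor M (trans φ) (can u) = ∑ j, (ee j : Fin m → A) ⊗ₜ[A] u (φ (ee j)) := by
  classical
  rw [can, map_sum]
  have h1 : ∀ i : Fin n, LinearMap.rTensor M (trans φ) ((ee i : Fin n → A) ⊗ₜ[A] u (ee i))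
      = ∑ j, (ee j : Fin m → A) ⊗ₜ[A] ((φ (ee j)) i • u (ee i)) := by
    intro i
    rw [LinearMap.rTensor_tmul]
    have h2 : trans φ (ee i) = ∑ j, (φ (ee j)) i • (ee j : Fin m → A) := by
      conv_lhs => rw [← sum_ee_smul (trans φ (ee i))]
      congr 1; funext j
      rw [trans_apply, dotp_ee_right]
    rw [h2, TensorProduct.sum_tmul]
    congr 1; funext j
    rw [TensorProduct.smul_tmul, TensorProduct.tmul_smul]
  rw [Finset.sum_congr rfl (fun i _ => h1 i), Finset.sum_comm]
  congr 1; funext j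
  rw [← TensorProduct.tmul_sum]
  congr 1
  have : φ (ee j) = ∑ i, (φ (ee j)) i • (ee i : Fin n → A) := (sum_ee_smul _).symm
  conv_rhs => rw [this]
  rw [map_sum]
  congr 1; funext i
  rw [map_smul]

lemma coordsL_can {n : ℕ} (u : (Fin n → A) →ₗ[A] M) (i : Fin n) :
    coordsL M (can u) i = u (ee i) := by
  classical
  rw [can, map_sum, Finset.sum_apply, Finset.sum_eq_single i]
  · simp [ee]
  · intro j _ hj
    simp [ee, Pi.single_apply, Ne.symm hj]
  · simp

lemma ext_basis {n : ℕ} {W : Type} [AddCommMonoid W] [Module A W]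
    (f g : (Fin n → A) →ₗ[A] W) (h : ∀ i, f (ee i) = g (ee i)) : f = g := by
  apply LinearMap.ext; intro x
  conv_lhs => rw [← sum_ee_smul x]
  conv_rhs => rw [← sum_ee_smul x]
  rw [map_sum, map_sum]
  exact Finset.sum_congr rfl fun i _ => by rw [map_smul, map_smul, h i]

/-- The key flatness lemma. -/
lemma keyLemma (hflat : TensorFlat A M) {n m : ℕ}
    (φ ψ : (Fin m → A) →ₗ[A] (Fin n → A)) (u : (Fin n → A) →ₗ[A] M)
    (hu : u ∘ₗ φ = u ∘ₗ ψ) :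
    ∃ (k : ℕ) (t : (Fin n → A) →ₗ[A] (Fin k → A)) (v : (Fin k → A) →ₗ[A] M),
      v ∘ₗ t = u ∧ t ∘ₗ φ = t ∘ₗ ψ := by
  classical
  obtain ⟨-, hrange⟩ := hflat (Fin n → A) (Fin m → A) (trans φ) (trans ψ)
  have hcan : can u ∈ LinearMap.eqLocus (LinearMap.rTensor M (trans φ))
      (LinearMap.rTensor M (trans ψ)) := by
    show LinearMap.rTensor M (trans φ) (can u) = LinearMap.rTensor M (trans ψ) (can u)
    rw [rTensor_trans_can, rTensor_trans_can]
    congr 1; funext j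
    have : u (φ (ee j)) = u (ψ (ee j)) := by
      have := congrArg (fun f => f (ee j)) hu
      simpa using this
    rw [this]
  rw [← hrange] at hcan
  obtain ⟨ω, hω⟩ := hcan
  obtain ⟨k, κ, μ, rfl⟩ := exists_fin_sum ω
  refine ⟨k, ?_, ?_, ?_, ?_⟩
  · exact { toFun := fun x => fun s => dotp x ((κ s : Fin n → A))
            map_add' := fun x y => by
              funext s; simp [dotp, add_mul, Finset.sum_add_distrib]
            map_smul' := fun r x => by
              funext s; simp [dotp, Finset.mul_sum]
              congr 1; funext i; ring }
  · exact { toFun := fun y => ∑ s, y s • μ s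
            map_add' := fun x y => by
              simp [add_smul, Finset.sum_add_distrib]
            map_smul' := fun r x => by
              simp [mul_smul, Finset.smul_sum]
            }
  · -- v ∘ t = u
    apply ext_basis
    intro i
    show (∑ s, dotp (ee i) (κ s : Fin n → A) • μ s) = u (ee i)
    have hco : coordsL M (LinearMap.rTensor M
        (LinearMap.eqLocus (trans φ) (trans ψ)).subtype (∑ s, (κ s) ⊗ₜ[A] μ s)) i
        = u (ee i) := by rw [hω, coordsL_can]
    rw [map_sum] at hco
    simp only [LinearMap.rTensor_tmul, Submodule.coe_subtype] at hco
    rw [map_sum, Finset.sum_apply] at hco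
    simp only [coordsL_tmul] at hco
    rw [← hco]
    congr 1; funext s
    rw [dotp_ee_left]
  · -- t ∘ φ = t ∘ ψ
    apply LinearMap.ext
    intro y
    funext s
    show dotp (φ y) (κ s : Fin n → A) = dotp (ψ y) (κ s : Fin n → A)
    rw [dotp_trans, dotp_trans]
    have : trans φ (κ s : Fin n → A) = trans ψ (κ s : Fin n → A) := (κ s).2
    rw [this]

theorem fp_flat_proj (hfp : IsFPSemimodule A M) (hflat : TensorFlat A M) :
    IsProjSemimodule A M := by
  classical
  obtain ⟨n, m, f, g, p, hsurj, hpres⟩ := hfp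
  have hpf : p ∘ₗ f = p ∘ₗ g := by
    apply LinearMap.ext; intro z
    show p (f z) = p (g z)
    rw [hpres]
    exact AddConGen.Rel.of _ _ ⟨z, rfl, rfl⟩
  obtain ⟨k, t, v, hvt, htfg⟩ := keyLemma hflat f g p hpf
  have hkey : ∀ x y, p x = p y → t x = t y := by
    intro x y hxy
    rw [hpres] at hxy
    let c : AddCon (Fin n → A) :=
      { r := fun a b => t a = t b
        iseqv := ⟨fun _ => rfl, Eq.symm, Eq.trans⟩
        add' := fun h1 h2 => by
          show t _ = t _
          rw [map_add, map_add, h1, h2] }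
    refine (AddCon.addConGen_le (c := c)).2 ?_ hxy
    rintro a b ⟨z, rfl, rfl⟩
    show t (f z) = t (g z)
    have := congrArg (fun h => h z) (congrArg DFunLike.coe htfg)
    simpa using this
  let σ : M → (Fin n → A) := Function.surjInv hsurj
  have hσ : ∀ x, p (σ x) = x := fun x => Function.surjInv_eq hsurj x
  let s : M →ₗ[A] (Fin k → A) :=
    { toFun := fun x => t (σ x)
      map_add' := fun x y => by
        have h1 : p (σ (x + y)) = p (σ x + σ y) := by
          rw [map_add, hσ, hσ, hσ]
        have := hkey _ _ h1
        show t (σ (x+y)) = t (σ x) + t (σ y)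
        rw [this, map_add]
      map_smul' := fun r x => by
        have h1 : p (σ (r • x)) = p (r • σ x) := by
          rw [map_smul, hσ, hσ]
        have := hkey _ _ h1
        show t (σ (r • x)) = r • t (σ x)
        rw [this, map_smul] }
  let E := Finsupp.linearEquivFunOnFinite A A (Fin k)
  refine ⟨Fin k, E.symm.toLinearMap ∘ₗ s, v ∘ₗ E.toLinearMap, fun x => ?_⟩
  show v (E (E.symm (t (σ x)))) = x
  rw [LinearEquiv.apply_symm_apply]
  have : v (t (σ x)) = p (σ x) := by
    have := congrArg (fun h => h (σ x)) (congrArg DFunLike.coe hvt)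
    simpa using this
  rw [this, hσ]

/-- bundled directed system of finite free modules over `M` -/
structure Sys (A : Type) [CommSemiring A] (M : Type) [AddCommMonoid M]
    [Module A M] where
  ι : Type
  [pre : Preorder ι]
  ne : Nonempty ι
  dir : ∀ i j : ι, ∃ k, i ≤ k ∧ j ≤ k
  n : ι → ℕ
  T : ∀ i j : ι, i ≤ j → ((Fin (n i) → A) →ₗ[A] (Fin (n j) → A))
  c : ∀ i : ι, (Fin (n i) → A) →ₗ[A] M
  Tid : ∀ (i : ι) (h : i ≤ i), T i i h = LinearMap.id
  Tcomp : ∀ (i j k : ι) (hij : i ≤ j) (hjk : j ≤ k),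
    (T j k hjk) ∘ₗ (T i j hij) = T i k (le_trans hij hjk)
  cc : ∀ (i j : ι) (hij : i ≤ j), (c j) ∘ₗ (T i j hij) = c i
  surj : ∀ x : M, ∃ (i : ι) (y : Fin (n i) → A), c i y = x
  det : ∀ (i : ι) (x y : Fin (n i) → A), c i x = c i y →
    ∃ (j : ι) (h : i ≤ j), T i j h x = T i j h y

attribute [instance] Sys.pre

namespace Sys

variable (S : Sys A M) (N : Type) [AddCommMonoid N] [Module A N]

def X : Type := Σ i : S.ι, (N ⊗[A] (Fin (S.n i) → A))

abbrev lT {i j : S.ι} (h : i ≤ j) :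
    (N ⊗[A] (Fin (S.n i) → A)) →ₗ[A] (N ⊗[A] (Fin (S.n j) → A)) :=
  LinearMap.lTensor N (S.T i j h)

variable {S N}

lemma lT_push {i k l : S.ι} (hik : i ≤ k) (hkl : k ≤ l)
    (u : N ⊗[A] (Fin (S.n i) → A)) :
    S.lT N (le_trans hik hkl) u = S.lT N hkl (S.lT N hik u) := by
  show LinearMap.lTensor N (S.T i l (le_trans hik hkl)) u = _
  rw [← S.Tcomp i k l hik hkl, LinearMap.lTensor_comp]
  rfl

lemma lT_refl {i : S.ι} (h : i ≤ i) (u : N ⊗[A] (Fin (S.n i) → A)) :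
    S.lT N h u = u := by
  show LinearMap.lTensor N (S.T i i h) u = u
  rw [S.Tid i h, LinearMap.lTensor_id]
  rfl

variable (S N)

def sd : Setoid (S.X N) where
  r := fun a b => ∃ (k : S.ι) (h1 : a.1 ≤ k) (h2 : b.1 ≤ k),
    S.lT N h1 a.2 = S.lT N h2 b.2
  iseqv := by
    constructor
    · intro a; exact ⟨a.1, le_refl _, le_refl _, rfl⟩
    · rintro a b ⟨k, h1, h2, h⟩; exact ⟨k, h2, h1, h.symm⟩
    · rintro a b c ⟨k, h1, h2, h⟩ ⟨k', h1', h2', h'⟩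
      obtain ⟨l, hkl, hk'l⟩ := S.dir k k'
      refine ⟨l, le_trans h1 hkl, le_trans h2' hk'l, ?_⟩
      rw [lT_push h1 hkl, lT_push h2' hk'l, h, ← h']
      rw [← lT_push h2 hkl, ← lT_push h1' hk'l]

def Q : Type := Quotient (S.sd N)

variable {S N}

def qmk (i : S.ι) (u : N ⊗[A] (Fin (S.n i) → A)) : S.Q N :=
  Quotient.mk (S.sd N) ⟨i, u⟩

lemma qmk_push {i k : S.ι} (h : i ≤ k) (u : N ⊗[A] (Fin (S.n i) → A)) :
    qmk i u = qmk k (S.lT N h u) := by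
  apply Quotient.sound
  exact ⟨k, h, le_refl k, by rw [lT_refl]⟩

lemma qmk_exact {i : S.ι} {u v : N ⊗[A] (Fin (S.n i) → A)}
    (h : qmk i u = qmk i v) : ∃ (k : S.ι) (hk : i ≤ k),
      S.lT N hk u = S.lT N hk v := by
  obtain ⟨k, h1, h2, he⟩ := Quotient.exact h
  exact ⟨k, h1, he⟩

def addX : S.X N → S.X N → S.Q N := fun a b =>
  qmk (S.dir a.1 b.1).choose
    (S.lT N (S.dir a.1 b.1).choose_spec.1 a.2 + S.lT N (S.dir a.1 b.1).choose_spec.2 b.2)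

lemma addX_eq (a b : S.X N) (k : S.ι) (h1 : a.1 ≤ k) (h2 : b.1 ≤ k) :
    addX a b = qmk k (S.lT N h1 a.2 + S.lT N h2 b.2) := by
  set k₀ := (S.dir a.1 b.1).choose
  obtain ⟨l, hkl, hk₀l⟩ := S.dir k k₀
  rw [addX]
  rw [qmk_push (k := l) hk₀l, qmk_push (k := l) hkl]
  congr 1
  rw [map_add, map_add]
  rw [← lT_push _ hk₀l, ← lT_push _ hk₀l, ← lT_push h1 hkl, ← lT_push h2 hkl]

lemma addX_welldef (a b a' b' : S.X N) (ha : (S.sd N) a a') (hb : (S.sd N) b b') :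
    addX a b = addX a' b' := by
  obtain ⟨k1, ha1, ha2, he1⟩ := ha
  obtain ⟨k2, hb1, hb2, he2⟩ := hb
  obtain ⟨l, h1, h2⟩ := S.dir k1 k2
  rw [addX_eq a b l (le_trans ha1 h1) (le_trans hb1 h2),
      addX_eq a' b' l (le_trans ha2 h1) (le_trans hb2 h2)]
  congr 2
  · rw [lT_push ha1 h1, lT_push ha2 h1, he1]
  · rw [lT_push hb1 h2, lT_push hb2 h2, he2]

def addQ : S.Q N → S.Q N → S.Q N :=
  Quotient.lift₂ addX (fun a b a' b' ha hb => addX_welldef a b a' b' ha hb)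

lemma addQ_mk_same (i : S.ι) (u v : N ⊗[A] (Fin (S.n i) → A)) :
    addQ (qmk i u) (qmk i v) = qmk i (u + v) := by
  show addX ⟨i, u⟩ ⟨i, v⟩ = _
  rw [addX_eq ⟨i,u⟩ ⟨i,v⟩ i (le_refl i) (le_refl i), lT_refl, lT_refl]

lemma exists_rep (q : S.Q N) : ∃ (i : S.ι) (u : N ⊗[A] (Fin (S.n i) → A)), q = qmk i u := by
  obtain ⟨⟨i, u⟩, rfl⟩ := Quotient.exists_rep q
  exact ⟨i, u, rfl⟩

lemma exists_rep₂ (q q' : S.Q N) : ∃ (i : S.ι) (u v : N ⊗[A] (Fin (S.n i) → A)),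
    q = qmk i u ∧ q' = qmk i v := by
  obtain ⟨i, u, rfl⟩ := exists_rep q
  obtain ⟨j, v, rfl⟩ := exists_rep q'
  obtain ⟨k, h1, h2⟩ := S.dir i j
  exact ⟨k, S.lT N h1 u, S.lT N h2 v, qmk_push h1 u, qmk_push h2 v⟩

lemma exists_rep₃ (q q' q'' : S.Q N) : ∃ (i : S.ι) (u v w : N ⊗[A] (Fin (S.n i) → A)),
    q = qmk i u ∧ q' = qmk i v ∧ q'' = qmk i w := by
  obtain ⟨i, u, v, rfl, rfl⟩ := exists_rep₂ q q'
  obtain ⟨j, w, rfl⟩ := exists_rep q''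
  obtain ⟨k, h1, h2⟩ := S.dir i j
  exact ⟨k, S.lT N h1 u, S.lT N h1 v, S.lT N h2 w, qmk_push h1 u, qmk_push h1 v, qmk_push h2 w⟩

instance : Zero (S.Q N) := ⟨qmk S.ne.some 0⟩
instance : Add (S.Q N) := ⟨addQ⟩

instance : AddCommMonoid (S.Q N) where
  add := addQ
  nsmul := nsmulRec
  zero := qmk S.ne.some 0
  add_assoc := by
    intro q q' q''
    obtain ⟨i, u, v, w, rfl, rfl, rfl⟩ := exists_rep₃ q q' q''
    show addQ (addQ _ _) _ = addQ _ (addQ _ _)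
    rw [addQ_mk_same, addQ_mk_same, addQ_mk_same, addQ_mk_same, add_assoc]
  add_comm := by
    intro q q'
    obtain ⟨i, u, v, rfl, rfl⟩ := exists_rep₂ q q'
    show addQ _ _ = addQ _ _
    rw [addQ_mk_same, addQ_mk_same, add_comm]
  zero_add := by
    intro q
    obtain ⟨i, u, rfl⟩ := exists_rep q
    show addQ (qmk S.ne.some 0) (qmk i u) = qmk i u
    obtain ⟨k, h1, h2⟩ := S.dir S.ne.some i
    rw [qmk_push h1 (0 : N ⊗[A] (Fin (S.n S.ne.some) → A)), map_zero,
        qmk_push (k := k) h2 u, addQ_mk_same, zero_add]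
  add_zero := by
    intro q
    obtain ⟨i, u, rfl⟩ := exists_rep q
    show addQ (qmk i u) (qmk S.ne.some 0) = qmk i u
    obtain ⟨k, h1, h2⟩ := S.dir S.ne.some i
    rw [qmk_push h1 (0 : N ⊗[A] (Fin (S.n S.ne.some) → A)), map_zero,
        qmk_push (k := k) h2 u, addQ_mk_same, add_zero]

lemma qmk_add (i : S.ι) (u v : N ⊗[A] (Fin (S.n i) → A)) :
    qmk i u + qmk i v = qmk i (u + v) := addQ_mk_same i u v

lemma qmk_zero (i : S.ι) : (qmk i 0 : S.Q N) = 0 := by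
  show qmk i 0 = qmk S.ne.some 0
  obtain ⟨k, h1, h2⟩ := S.dir i S.ne.some
  rw [qmk_push h1 (0 : N ⊗[A] (Fin (S.n i) → A)), map_zero,
      qmk_push h2 (0 : N ⊗[A] (Fin (S.n S.ne.some) → A)), map_zero]


variable (S)

def sel (m : M) : S.ι := (S.surj m).choose
def sely (m : M) : (Fin (S.n (S.sel m)) → A) := (S.surj m).choose_spec.choose
lemma sel_spec (m : M) : S.c (S.sel m) (S.sely m) = m :=
  (S.surj m).choose_spec.choose_spec

variable {S}

lemma cc_apply {i j : S.ι} (h : i ≤ j) (y : Fin (S.n i) → A) :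
    S.c j (S.T i j h y) = S.c i y := by
  have := congrArg (fun f => f y) (congrArg DFunLike.coe (S.cc i j h))
  simpa using this

lemma Tcomp_apply {i j k : S.ι} (hij : i ≤ j) (hjk : j ≤ k) (y : Fin (S.n i) → A) :
    S.T j k hjk (S.T i j hij y) = S.T i k (le_trans hij hjk) y := by
  have := congrArg (fun f => f y) (congrArg DFunLike.coe (S.Tcomp i j k hij hjk))
  simpa using this

lemma qmk_tmul_indep (x : N) {i j : S.ι} (y : Fin (S.n i) → A) (y' : Fin (S.n j) → A)
    (h : S.c i y = S.c j y') : (qmk i (x ⊗ₜ[A] y) : S.Q N) = qmk j (x ⊗ₜ[A] y') := by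
  obtain ⟨k₀, h1, h2⟩ := S.dir i j
  have hc : S.c k₀ (S.T i k₀ h1 y) = S.c k₀ (S.T j k₀ h2 y') := by
    rw [cc_apply, cc_apply, h]
  obtain ⟨k, hk, he⟩ := S.det k₀ _ _ hc
  have t1 : S.T i k (le_trans h1 hk) y = S.T j k (le_trans h2 hk) y' := by
    rw [← Tcomp_apply h1 hk y, ← Tcomp_apply h2 hk y', he]
  rw [qmk_push (le_trans h1 hk), qmk_push (le_trans h2 hk)]
  show qmk k (LinearMap.lTensor N _ (x ⊗ₜ[A] y)) = qmk k (LinearMap.lTensor N _ (x ⊗ₜ[A] y'))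
  rw [LinearMap.lTensor_tmul, LinearMap.lTensor_tmul, t1]

variable (S N)

def F0 (x : N) (m : M) : S.Q N := qmk (S.sel m) (x ⊗ₜ[A] S.sely m)

variable {S N}

lemma F0_eq (x : N) (i : S.ι) (y : Fin (S.n i) → A) :
    F0 S N x (S.c i y) = qmk i (x ⊗ₜ[A] y) :=
  qmk_tmul_indep x _ _ (S.sel_spec _)

lemma F0_zero_right (x : N) : F0 S N x 0 = 0 := by
  have h0 : (0 : M) = S.c S.ne.some 0 := (map_zero _).symm
  rw [h0, F0_eq, TensorProduct.tmul_zero, qmk_zero]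

lemma F0_add_right (x : N) (m m' : M) :
    F0 S N x (m + m') = F0 S N x m + F0 S N x m' := by
  obtain ⟨k, h1, h2⟩ := S.dir (S.sel m) (S.sel m')
  have hm : m = S.c k (S.T _ k h1 (S.sely m)) := by rw [cc_apply, S.sel_spec]
  have hm' : m' = S.c k (S.T _ k h2 (S.sely m')) := by rw [cc_apply, S.sel_spec]
  have hsum : m + m' = S.c k (S.T _ k h1 (S.sely m) + S.T _ k h2 (S.sely m')) := by
    rw [map_add, ← hm, ← hm']
  rw [hsum, F0_eq]
  conv_rhs => rw [hm, hm', F0_eq, F0_eq]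
  rw [TensorProduct.tmul_add, ← qmk_add]

lemma F0_zero_left (m : M) : F0 S N 0 m = 0 := by
  rw [F0, TensorProduct.zero_tmul, qmk_zero]

lemma F0_add_left (x x' : N) (m : M) :
    F0 S N (x + x') m = F0 S N x m + F0 S N x' m := by
  rw [F0, F0, F0, TensorProduct.add_tmul, ← qmk_add]

lemma F0_smul (r : A) (x : N) (m : M) : F0 S N (r • x) m = F0 S N x (r • m) := by
  have h1 : r • m = S.c (S.sel m) (r • S.sely m) := by rw [map_smul, S.sel_spec]
  rw [h1, F0_eq, F0, TensorProduct.smul_tmul]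

variable (S N)

def F : N →+ M →+ S.Q N where
  toFun x :=
    { toFun := F0 S N x
      map_zero' := F0_zero_right x
      map_add' := F0_add_right x }
  map_zero' := by
    apply AddMonoidHom.ext; intro m
    exact F0_zero_left m
  map_add' x x' := by
    apply AddMonoidHom.ext; intro m
    exact F0_add_left x x' m

def Phi : (N ⊗[A] M) →+ S.Q N :=
  TensorProduct.liftAddHom (F S N) (fun r x m => F0_smul r x m)

variable {S N}

lemma Phi_tmul (x : N) (m : M) : Phi S N (x ⊗ₜ[A] m) = F0 S N x m := by
  rw [Phi]
  exact TensorProduct.liftAddHom_tmul _ _ _ _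

lemma Phi_lT (i : S.ι) (u : N ⊗[A] (Fin (S.n i) → A)) :
    Phi S N (LinearMap.lTensor N (S.c i) u) = qmk i u := by
  induction u with
  | zero => rw [map_zero, map_zero, qmk_zero]
  | tmul x y =>
      rw [LinearMap.lTensor_tmul, Phi_tmul, F0_eq]
  | add u v hu hv =>
      rw [map_add, map_add, hu, hv, qmk_add]

/-- equality in `N ⊗ M` of images from a stage is detected at a later stage -/
lemma star {i : S.ι} {u v : N ⊗[A] (Fin (S.n i) → A)}
    (h : LinearMap.lTensor N (S.c i) u = LinearMap.lTensor N (S.c i) v) :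
    ∃ (k : S.ι) (hk : i ≤ k), S.lT N hk u = S.lT N hk v := by
  have := congrArg (Phi S N) h
  rw [Phi_lT, Phi_lT] at this
  exact qmk_exact this

/-- every element of `N ⊗ M` comes from some stage -/
lemma qsurj (w : N ⊗[A] M) :
    ∃ (i : S.ι) (u : N ⊗[A] (Fin (S.n i) → A)), LinearMap.lTensor N (S.c i) u = w := by
  induction w with
  | zero => exact ⟨S.ne.some, 0, map_zero _⟩
  | tmul x m =>
      exact ⟨S.sel m, x ⊗ₜ[A] S.sely m, by rw [LinearMap.lTensor_tmul, S.sel_spec]⟩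
  | add w w' hw hw' =>
      obtain ⟨i, u, hu⟩ := hw
      obtain ⟨j, v, hv⟩ := hw'
      obtain ⟨k, h1, h2⟩ := S.dir i j
      refine ⟨k, S.lT N h1 u + S.lT N h2 v, ?_⟩
      rw [map_add]
      have e1 : LinearMap.lTensor N (S.c k) (S.lT N h1 u) = LinearMap.lTensor N (S.c i) u := by
        show (LinearMap.lTensor N (S.c k) ∘ₗ LinearMap.lTensor N (S.T i k h1)) u = _
        rw [← LinearMap.lTensor_comp, S.cc]
      have e2 : LinearMap.lTensor N (S.c k) (S.lT N h2 v) = LinearMap.lTensor N (S.c j) v := by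
        show (LinearMap.lTensor N (S.c k) ∘ₗ LinearMap.lTensor N (S.T j k h2)) v = _
        rw [← LinearMap.lTensor_comp, S.cc]
      rw [e1, e2, hu, hv]


lemma lT_cc {i j : S.ι} (h : i ≤ j)
    (u : N ⊗[A] (Fin (S.n i) → A)) :
    LinearMap.lTensor N (S.c j) (S.lT N h u) = LinearMap.lTensor N (S.c i) u := by
  show (LinearMap.lTensor N (S.c j) ∘ₗ LinearMap.lTensor N (S.T i j h)) u = _
  rw [← LinearMap.lTensor_comp, S.cc]

end Sys

lemma map_swap {V V' W W' : Type} [AddCommMonoid V] [AddCommMonoid V']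
    [AddCommMonoid W] [AddCommMonoid W'] [Module A V] [Module A V'] [Module A W]
    [Module A W'] (f : V →ₗ[A] V') (g : W →ₗ[A] W') (t : V ⊗[A] W) :
    LinearMap.rTensor W' f (LinearMap.lTensor V g t)
      = LinearMap.lTensor V' g (LinearMap.rTensor W f t) := by
  have h1 := LinearMap.rTensor_comp_lTensor (R := A) V f g
  have h2 := LinearMap.lTensor_comp_rTensor (R := A) V f g
  have e1 := congrArg (fun h => h t) (congrArg DFunLike.coe h1)
  have e2 := congrArg (fun h => h t) (congrArg DFunLike.coe h2)
  simp only [LinearMap.coe_comp, Function.comp_apply] at e1 e2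
  rw [e1, e2]

theorem sys_flat (S : Sys A M) : TensorFlat A M := by
  classical
  intro N P _ _ _ _ f g
  set K := LinearMap.eqLocus f g with hK
  have hσinj : Function.Injective K.subtype := Subtype.coe_injective
  have hfgσ : f ∘ₗ K.subtype = g ∘ₗ K.subtype := by
    apply LinearMap.ext; rintro ⟨x, hx⟩
    exact hx
  constructor
  · -- injectivity
    intro w w' h
    obtain ⟨i₁, u₁, hu₁⟩ := Sys.qsurj (S := S) (N := ↥K) w
    obtain ⟨i₂, u₂, hu₂⟩ := Sys.qsurj (S := S) (N := ↥K) w'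
    obtain ⟨i, h1, h2⟩ := S.dir i₁ i₂
    set u := S.lT ↥K h1 u₁ with hu
    set u' := S.lT ↥K h2 u₂ with hu'
    have hw : LinearMap.lTensor ↥K (S.c i) u = w := by rw [hu, Sys.lT_cc, hu₁]
    have hw' : LinearMap.lTensor ↥K (S.c i) u' = w' := by rw [hu', Sys.lT_cc, hu₂]
    -- images in N ⊗ M agree
    have him : LinearMap.lTensor N (S.c i) (LinearMap.rTensor _ K.subtype u)
        = LinearMap.lTensor N (S.c i) (LinearMap.rTensor _ K.subtype u') := by
      rw [← map_swap, ← map_swap, hw, hw', h]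
    obtain ⟨j, hk, he⟩ := Sys.star him
    have he' : LinearMap.rTensor _ K.subtype (S.lT ↥K hk u)
        = LinearMap.rTensor _ K.subtype (S.lT ↥K hk u') := by
      have a1 : S.lT N hk (LinearMap.rTensor _ K.subtype u)
          = LinearMap.rTensor _ K.subtype (S.lT ↥K hk u) :=
        (map_swap K.subtype (S.T i j hk) u).symm
      have a2 : S.lT N hk (LinearMap.rTensor _ K.subtype u')
          = LinearMap.rTensor _ K.subtype (S.lT ↥K hk u') :=
        (map_swap K.subtype (S.T i j hk) u').symm
      rw [← a1, ← a2, he]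
    have hequ : S.lT ↥K hk u = S.lT ↥K hk u' := by
      apply coords_injective
      funext s
      have b1 := coords_rTensor (n := S.n j) K.subtype (S.lT ↥K hk u) s
      have b2 := coords_rTensor (n := S.n j) K.subtype (S.lT ↥K hk u') s
      apply hσinj
      rw [← b1, ← b2, he']
    rw [← hw, ← hw', ← Sys.lT_cc hk u, ← Sys.lT_cc hk u', hequ]
  · -- range = eqLocus
    apply le_antisymm
    · rintro z ⟨z', rfl⟩
      show LinearMap.rTensor M f _ = LinearMap.rTensor M g _
      have : ∀ (q : ↥K ⊗[A] M), LinearMap.rTensor M f (LinearMap.rTensor M K.subtype q)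
          = LinearMap.rTensor M g (LinearMap.rTensor M K.subtype q) := by
        intro q
        have c1 : LinearMap.rTensor M f ∘ₗ LinearMap.rTensor M K.subtype
            = LinearMap.rTensor M g ∘ₗ LinearMap.rTensor M K.subtype := by
          rw [← LinearMap.rTensor_comp, ← LinearMap.rTensor_comp, hfgσ]
        have := congrArg (fun h => h q) (congrArg DFunLike.coe c1)
        simpa using this
      exact this z'
    · intro w hw
      have hw' : LinearMap.rTensor M f w = LinearMap.rTensor M g w := hw
      obtain ⟨i, u, hu⟩ := Sys.qsurj (S := S) (N := N) w
      have him : LinearMap.lTensor P (S.c i) (LinearMap.rTensor _ f u)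
          = LinearMap.lTensor P (S.c i) (LinearMap.rTensor _ g u) := by
        rw [← map_swap, ← map_swap, hu, hw']
      obtain ⟨j, hk, he⟩ := Sys.star him
      set u' := S.lT N hk u with hudef
      have he' : LinearMap.rTensor _ f u' = LinearMap.rTensor _ g u' := by
        have a1 : S.lT P hk (LinearMap.rTensor _ f u)
            = LinearMap.rTensor _ f u' :=
          (map_swap f (S.T i j hk) u).symm
        have a2 : S.lT P hk (LinearMap.rTensor _ g u)
            = LinearMap.rTensor _ g u' :=
          (map_swap g (S.T i j hk) u).symm
        rw [← a1, ← a2, he]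
      have hmem : ∀ s, coords N u' s ∈ K := by
        intro s
        show f (coords N u' s) = g (coords N u' s)
        rw [← coords_rTensor (n := S.n j) f u' s, ← coords_rTensor (n := S.n j) g u' s, he']
      have hwj : w = LinearMap.lTensor N (S.c j) u' := by
        rw [hudef, Sys.lT_cc, hu]
      refine ⟨∑ s, (⟨coords N u' s, hmem s⟩ : ↥K) ⊗ₜ[A] (S.c j (ee s)), ?_⟩
      rw [map_sum]
      simp only [LinearMap.rTensor_tmul, Submodule.coe_subtype]
      rw [hwj]
      conv_rhs => rw [coords_reconstruct u', map_sum]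
      exact Finset.sum_congr rfl fun s _ => by rw [LinearMap.lTensor_tmul]

/-! ### The Lazard construction: flat ⇒ filtered colimit of finite free -/

/-- objects: tagged finite free modules over `M` -/
structure Obj (A : Type) [CommSemiring A] (M : Type) [AddCommMonoid M]
    [Module A M] where
  tag : ℕ
  nn : ℕ
  u : (Fin nn → A) →ₗ[A] M

/-- morphisms (as raw data) -/
structure Mor (A : Type) [CommSemiring A] (M : Type) [AddCommMonoid M]
    [Module A M] where
  src : Obj A M
  dst : Obj A M
  t : (Fin src.nn → A) →ₗ[A] (Fin dst.nn → A)

def Mor.Good (f : Mor A M) : Prop := f.dst.u ∘ₗ f.t = f.src.u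

def occ (S : Set (Mor A M)) : Set (Obj A M) :=
  {a | ∃ f ∈ S, f.src = a ∨ f.dst = a}

lemma occ_mono {S S' : Set (Mor A M)} (h : S ⊆ S') : occ S ⊆ occ S' := by
  rintro a ⟨f, hf, hfa⟩
  exact ⟨f, h hf, hfa⟩

lemma occ_finite {S : Set (Mor A M)} (h : S.Finite) : (occ S).Finite := by
  have : occ S ⊆ (Mor.src '' S) ∪ (Mor.dst '' S) := by
    rintro a ⟨f, hf, hfa | hfa⟩
    · exact Or.inl ⟨f, hf, hfa⟩
    · exact Or.inr ⟨f, hf, hfa⟩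
  exact Set.Finite.subset ((h.image _).union (h.image _)) this

/-- extension-by-zero inclusions and restrictions for `A^{n+m}` -/
def inclL (n m : ℕ) : (Fin n → A) →ₗ[A] (Fin (n+m) → A) where
  toFun x := Fin.append x 0
  map_add' x y := by
    funext i
    refine Fin.addCases (fun j => ?_) (fun j => ?_) i
    · simp [Fin.append_left]
    · simp [Fin.append_right]
  map_smul' r x := by
    funext i
    refine Fin.addCases (fun j => ?_) (fun j => ?_) i
    · simp [Fin.append_left]
    · simp [Fin.append_right]

def inclR (n m : ℕ) : (Fin m → A) →ₗ[A] (Fin (n+m) → A) where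
  toFun x := Fin.append 0 x
  map_add' x y := by
    funext i
    refine Fin.addCases (fun j => ?_) (fun j => ?_) i
    · simp [Fin.append_left]
    · simp [Fin.append_right]
  map_smul' r x := by
    funext i
    refine Fin.addCases (fun j => ?_) (fun j => ?_) i
    · simp [Fin.append_left]
    · simp [Fin.append_right]

def glue {p q : ℕ} (u1 : (Fin p → A) →ₗ[A] M) (u2 : (Fin q → A) →ₗ[A] M) :
    (Fin (p+q) → A) →ₗ[A] M :=
  u1 ∘ₗ LinearMap.funLeft A A (Fin.castAdd q) + u2 ∘ₗ LinearMap.funLeft A A (Fin.natAdd p)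

lemma glue_inclL {p q : ℕ} (u1 : (Fin p → A) →ₗ[A] M) (u2 : (Fin q → A) →ₗ[A] M) :
    glue u1 u2 ∘ₗ inclL p q = u1 := by
  apply LinearMap.ext; intro x
  show u1 (fun i => Fin.append x 0 (Fin.castAdd q i))
      + u2 (fun i => Fin.append x 0 (Fin.natAdd p i)) = u1 x
  have h1 : (fun i => Fin.append x (0 : Fin q → A) (Fin.castAdd q i)) = x := by
    funext i; rw [Fin.append_left]
  have h2 : (fun i => Fin.append x (0 : Fin q → A) (Fin.natAdd p i)) = 0 := by
    funext i; rw [Fin.append_right]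
  rw [h1, h2, map_zero, add_zero]

lemma glue_inclR {p q : ℕ} (u1 : (Fin p → A) →ₗ[A] M) (u2 : (Fin q → A) →ₗ[A] M) :
    glue u1 u2 ∘ₗ inclR p q = u2 := by
  apply LinearMap.ext; intro x
  show u1 (fun i => Fin.append 0 x (Fin.castAdd q i))
      + u2 (fun i => Fin.append 0 x (Fin.natAdd p i)) = u2 x
  have h1 : (fun i => Fin.append (0 : Fin p → A) x (Fin.castAdd q i)) = 0 := by
    funext i; rw [Fin.append_left]
  have h2 : (fun i => Fin.append (0 : Fin p → A) x (Fin.natAdd p i)) = x := by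
    funext i; rw [Fin.append_right]
  rw [h1, h2, map_zero, zero_add]

/-- recasting a map along an equality of dimensions -/
def castMap {p q : ℕ} (h : p = q) : (Fin q → A) →ₗ[A] (Fin p → A) :=
  LinearMap.funLeft A A (Fin.cast h)

lemma castMap_rfl {p : ℕ} (h : p = p) : (castMap h : (Fin p → A) →ₗ[A] (Fin p → A))
    = LinearMap.id := by
  apply LinearMap.ext; intro x
  funext i
  show x (Fin.cast h i) = x i
  congr 1

/-- a cocone over any finite set of objects -/
lemma cocone_objs (O : Set (Obj A M)) (hO : O.Finite) :
    ∃ (w : Obj A M) (κ : ∀ a : Obj A M, (Fin a.nn → A) →ₗ[A] (Fin w.nn → A)),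
      ∀ a ∈ O, w.u ∘ₗ κ a = a.u := by
  classical
  refine Set.Finite.induction_on O hO ⟨⟨0, 0, 0⟩, fun a => 0, by simp⟩ ?_
  intro a O' ha hO' ih
  obtain ⟨w, κ, hκ⟩ := ih
  refine ⟨⟨0, a.nn + w.nn, glue a.u w.u⟩,
    fun b => if e : b = a
      then inclL a.nn w.nn ∘ₗ castMap (by rw [e])
      else inclR a.nn w.nn ∘ₗ κ b, ?_⟩
  intro b hb
  by_cases e : b = a
  · subst e
    beta_reduce
    rw [dif_pos rfl]
    show glue b.u w.u ∘ₗ (inclL b.nn w.nn ∘ₗ castMap _) = b.u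
    rw [← LinearMap.comp_assoc, glue_inclL, castMap_rfl, LinearMap.comp_id]
  · beta_reduce
    rw [dif_neg e]
    have hbO : b ∈ O' := by
      rcases hb with h | h
      · exact absurd h e
      · exact h
    show glue a.u w.u ∘ₗ (inclR a.nn w.nn ∘ₗ κ b) = b.u
    rw [← LinearMap.comp_assoc, glue_inclR, hκ b hbO]

/-- improving a cocone over objects to also coequalize a list of morphisms
(this is where flatness enters) -/
lemma cocone_fix (hflat : TensorFlat A M) (O : Set (Obj A M))
    (l : List (Mor A M)) (hl : ∀ f ∈ l, f.Good ∧ f.src ∈ O ∧ f.dst ∈ O)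
    (w : Obj A M) (κ : ∀ a : Obj A M, (Fin a.nn → A) →ₗ[A] (Fin w.nn → A))
    (hobj : ∀ a ∈ O, w.u ∘ₗ κ a = a.u) :
    ∃ (w' : Obj A M) (κ' : ∀ a : Obj A M, (Fin a.nn → A) →ₗ[A] (Fin w'.nn → A)),
      (∀ a ∈ O, w'.u ∘ₗ κ' a = a.u) ∧ ∀ f ∈ l, κ' f.dst ∘ₗ f.t = κ' f.src := by
  induction l with
  | nil => exact ⟨w, κ, hobj, by simp⟩
  | cons f l ih =>
      obtain ⟨w1, κ1, h1, h2⟩ := ih (fun f' hf' => hl f' (List.mem_cons_of_mem f hf'))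
      have hf := hl f List.mem_cons_self
      have hu : w1.u ∘ₗ (κ1 f.dst ∘ₗ f.t) = w1.u ∘ₗ κ1 f.src := by
        rw [← LinearMap.comp_assoc, h1 f.dst hf.2.2, hf.1, h1 f.src hf.2.1]
      obtain ⟨k, t, v, hvt, hteq⟩ := keyLemma hflat (κ1 f.dst ∘ₗ f.t) (κ1 f.src) w1.u hu
      refine ⟨⟨0, k, v⟩, fun a => t ∘ₗ κ1 a, ?_, ?_⟩
      · intro a ha
        show v ∘ₗ (t ∘ₗ κ1 a) = a.u
        rw [← LinearMap.comp_assoc, hvt, h1 a ha]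
      · intro f' hf'
        rcases List.mem_cons.mp hf' with rfl | hf'mem
        · show (t ∘ₗ κ1 f'.dst) ∘ₗ f'.t = t ∘ₗ κ1 f'.src
          rw [LinearMap.comp_assoc]
          exact hteq
        · show (t ∘ₗ κ1 f'.dst) ∘ₗ f'.t = t ∘ₗ κ1 f'.src
          rw [LinearMap.comp_assoc, h2 f' hf'mem]

/-- a fresh-vertex cocone over any finite good set of morphisms -/
lemma cocone_full (hflat : TensorFlat A M) (S0 : Set (Mor A M)) (hfin : S0.Finite)
    (hgood : ∀ f ∈ S0, f.Good) :
    ∃ (w : Obj A M) (κ : ∀ a : Obj A M, (Fin a.nn → A) →ₗ[A] (Fin w.nn → A)),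
      (∀ a ∈ occ S0, w.u ∘ₗ κ a = a.u) ∧ (∀ f ∈ S0, κ f.dst ∘ₗ f.t = κ f.src) ∧
      w ∉ occ S0 := by
  classical
  obtain ⟨w0, κ0, h0⟩ := cocone_objs (occ S0) (occ_finite hfin)
  have hlist : ∀ f ∈ hfin.toFinset.toList, f.Good ∧ f.src ∈ occ S0 ∧ f.dst ∈ occ S0 := by
    intro f hf
    rw [Finset.mem_toList, Set.Finite.mem_toFinset] at hf
    exact ⟨hgood f hf, ⟨f, hf, Or.inl rfl⟩, ⟨f, hf, Or.inr rfl⟩⟩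
  obtain ⟨w1, κ1, hobj, hmor⟩ := cocone_fix hflat (occ S0) hfin.toFinset.toList hlist w0 κ0 h0
  -- fresh tag
  obtain ⟨τ, hτ⟩ := Set.Infinite.nonempty (Set.Finite.infinite_compl
    ((occ_finite hfin).image Obj.tag))
  refine ⟨⟨τ, w1.nn, w1.u⟩, κ1, ?_, ?_, ?_⟩
  · intro a ha; exact hobj a ha
  · intro f hf
    apply hmor
    rw [Finset.mem_toList, Set.Finite.mem_toFinset]
    exact hf
  · intro hmem
    exact hτ ⟨⟨τ, w1.nn, w1.u⟩, hmem, rfl⟩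

/-- points of the index preorder -/
structure Pt (A : Type) [CommSemiring A] (M : Type) [AddCommMonoid M]
    [Module A M] where
  S : Set (Mor A M)
  fin : S.Finite
  w : Obj A M
  h : ∀ a : Obj A M, (Fin a.nn → A) →ₗ[A] (Fin w.nn → A)
  good : ∀ f ∈ S, f.Good
  coc : ∀ f ∈ S, h f.dst ∘ₗ f.t = h f.src
  compat : ∀ a ∈ occ S, w.u ∘ₗ h a = a.u
  mem : ∀ a ∈ occ S, (⟨a, w, h a⟩ : Mor A M) ∈ S
  hw : h w = LinearMap.id
  wocc : w ∈ occ S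

instance : Preorder (Pt A M) where
  le p q := p.S ⊆ q.S
  le_refl p := subset_rfl
  le_trans p q r hpq hqr := subset_trans hpq hqr

lemma Pt.le_def {p q : Pt A M} : p ≤ q ↔ p.S ⊆ q.S := Iff.rfl

lemma Pt.w_occ_of_le {p q : Pt A M} (h : p ≤ q) : p.w ∈ occ q.S :=
  occ_mono h p.wocc

/-- the master extension lemma: any finite good set of morphisms is contained in
the `S` of some point -/
lemma mkPt (hflat : TensorFlat A M) (S0 : Set (Mor A M)) (hfin : S0.Finite)
    (hgood : ∀ f ∈ S0, f.Good) : ∃ p : Pt A M, S0 ⊆ p.S := by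
  classical
  obtain ⟨w, κ, hobj, hcoc, hfresh⟩ := cocone_full hflat S0 hfin hgood
  set Sκ : Set (Mor A M) := (fun a => (⟨a, w, κ a⟩ : Mor A M)) '' occ S0 with hSκ
  set S' : Set (Mor A M) := S0 ∪ Sκ ∪ {(⟨w, w, LinearMap.id⟩ : Mor A M)} with hS'
  have hne_w : ∀ a ∈ occ S0, a ≠ w := fun a ha he => hfresh (he ▸ ha)
  set h' : ∀ a : Obj A M, (Fin a.nn → A) →ₗ[A] (Fin w.nn → A) :=
    fun a => if e : a = w then castMap (by rw [e]) else κ a with hh'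
  have h'w : h' w = LinearMap.id := by rw [hh']; simp only [dif_pos]; exact castMap_rfl rfl
  have h'a : ∀ a, a ≠ w → h' a = κ a := by intro a ha; rw [hh']; simp only [dif_neg ha]
  -- occ S' analysis
  have hoccS' : occ S' ⊆ occ S0 ∪ {w} := by
    rintro b ⟨f, hf, hfb⟩
    rcases hf with (hf | hf) | hf
    · exact Or.inl ⟨f, hf, hfb⟩
    · obtain ⟨a, ha, rfl⟩ := hf
      rcases hfb with rfl | rfl
      · exact Or.inl ha
      · exact Or.inr rfl
    · rcases Set.mem_singleton_iff.mp hf with rfl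
      rcases hfb with rfl | rfl
      · exact Or.inr rfl
      · exact Or.inr rfl
  have hS0S' : S0 ⊆ S' := fun f hf => Or.inl (Or.inl hf)
  have hSκS' : Sκ ⊆ S' := fun f hf => Or.inl (Or.inr hf)
  have hidS' : (⟨w, w, LinearMap.id⟩ : Mor A M) ∈ S' := Or.inr rfl
  refine ⟨⟨S', ?_, w, h', ?_, ?_, ?_, ?_, h'w, ?_⟩, hS0S'⟩
  · -- finite
    exact ((hfin.union ((occ_finite hfin).image _)).union (Set.finite_singleton _))
  · -- good
    rintro f ((hf | hf) | hf)
    · exact hgood f hf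
    · obtain ⟨a, ha, rfl⟩ := hf
      exact hobj a ha
    · rcases Set.mem_singleton_iff.mp hf with rfl
      show Obj.u w ∘ₗ LinearMap.id = Obj.u w
      rw [LinearMap.comp_id]
  · -- coc
    rintro f ((hf | hf) | hf)
    · have hs : f.src ≠ w := hne_w _ ⟨f, hf, Or.inl rfl⟩
      have hd : f.dst ≠ w := hne_w _ ⟨f, hf, Or.inr rfl⟩
      rw [h'a _ hs, h'a _ hd]
      exact hcoc f hf
    · obtain ⟨a, ha, rfl⟩ := hf
      show h' w ∘ₗ κ a = h' a
      rw [h'w, h'a a (hne_w a ha), LinearMap.id_comp]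
    · rcases Set.mem_singleton_iff.mp hf with rfl
      show h' w ∘ₗ LinearMap.id = h' w
      rw [LinearMap.comp_id]
  · -- compat
    intro a ha
    rcases hoccS' ha with ha0 | haw
    · rw [h'a a (hne_w a ha0)]
      exact hobj a ha0
    · rcases Set.mem_singleton_iff.mp haw with rfl
      rw [h'w]
      show Obj.u a ∘ₗ LinearMap.id = Obj.u a
      rw [LinearMap.comp_id]
  · -- mem
    intro a ha
    rcases hoccS' ha with ha0 | haw
    · rw [h'a a (hne_w a ha0)]
      exact hSκS' ⟨a, ha0, rfl⟩
    · rcases Set.mem_singleton_iff.mp haw with rfl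
      rw [h'w]
      exact hidS'
  · -- wocc
    exact ⟨_, hidS', Or.inl rfl⟩

/-- The data of the filtered colimit over `Pt A M` -/
def ptn (p : Pt A M) : ℕ := p.w.nn

def ptT (p q : Pt A M) (h : p ≤ q) : (Fin (ptn p) → A) →ₗ[A] (Fin (ptn q) → A) :=
  q.h p.w

def ptc (p : Pt A M) : (Fin (ptn p) → A) →ₗ[A] M := p.w.u

lemma ptT_id (p : Pt A M) (h : p ≤ p) : ptT p p h = LinearMap.id := p.hw

lemma ptT_comp (p q r : Pt A M) (hpq : p ≤ q) (hqr : q ≤ r) :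
    ptT q r hqr ∘ₗ ptT p q hpq = ptT p r (le_trans hpq hqr) := by
  have hmor : (⟨p.w, q.w, q.h p.w⟩ : Mor A M) ∈ r.S :=
    hqr (q.mem p.w (Pt.w_occ_of_le hpq))
  exact r.coc _ hmor

lemma ptc_comp (p q : Pt A M) (hpq : p ≤ q) : ptc q ∘ₗ ptT p q hpq = ptc p :=
  q.compat p.w (Pt.w_occ_of_le hpq)

lemma pt_nonempty (hflat : TensorFlat A M) : Nonempty (Pt A M) := by
  obtain ⟨p, -⟩ := mkPt hflat ∅ Set.finite_empty (by simp)
  exact ⟨p⟩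

lemma pt_directed (hflat : TensorFlat A M) (p q : Pt A M) :
    ∃ r : Pt A M, p ≤ r ∧ q ≤ r := by
  obtain ⟨r, hr⟩ := mkPt hflat (p.S ∪ q.S) (p.fin.union q.fin)
    (by rintro f (hf | hf); exacts [p.good f hf, q.good f hf])
  exact ⟨r, Set.Subset.trans Set.subset_union_left hr,
    Set.Subset.trans Set.subset_union_right hr⟩

/-- the object `A¹ → M` hitting a given element -/
def unitObj (m : M) : Obj A M :=
  ⟨0, 1, { toFun := fun x => x 0 • m
           map_add' := fun x y => by simp [add_smul]
           map_smul' := fun r x => by simp [mul_smul] }⟩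

lemma pt_surj (hflat : TensorFlat A M) (m : M) :
    ∃ (p : Pt A M) (y : Fin (ptn p) → A), ptc p y = m := by
  classical
  set a : Obj A M := unitObj m with ha
  have hgood : (⟨a, a, LinearMap.id⟩ : Mor A M).Good := by
    show Obj.u a ∘ₗ LinearMap.id = Obj.u a
    rw [LinearMap.comp_id]
  obtain ⟨p, hp⟩ := mkPt hflat {(⟨a, a, LinearMap.id⟩ : Mor A M)}
    (Set.finite_singleton _) (by rintro f rfl; exact hgood)
  have haocc : a ∈ occ p.S := ⟨_, hp rfl, Or.inl rfl⟩
  have hcompat := p.compat a haocc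
  have happ : p.w.u (p.h a (fun _ => (1:A))) = a.u (fun _ => (1:A)) := by
    have := congrArg (fun f => f (fun _ => (1:A))) (congrArg DFunLike.coe hcompat)
    simpa using this
  refine ⟨p, p.h a (fun _ => 1), ?_⟩
  show p.w.u (p.h a (fun _ => (1:A))) = m
  exact happ.trans (one_smul A m)

lemma pt_det (hflat : TensorFlat A M) (p : Pt A M) (x y : Fin (ptn p) → A)
    (hxy : ptc p x = ptc p y) :
    ∃ (q : Pt A M) (h : p ≤ q), ptT p q h x = ptT p q h y := by
  classical
  -- two maps A¹ → A^{n p} classifying x and y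
  set φ : (Fin 1 → A) →ₗ[A] (Fin (ptn p) → A) :=
    { toFun := fun z => z 0 • x
      map_add' := fun z z' => by simp [add_smul]
      map_smul' := fun r z => by simp [mul_smul] } with hφ
  set ψ : (Fin 1 → A) →ₗ[A] (Fin (ptn p) → A) :=
    { toFun := fun z => z 0 • y
      map_add' := fun z z' => by simp [add_smul]
      map_smul' := fun r z => by simp [mul_smul] } with hψ
  have hu : p.w.u ∘ₗ φ = p.w.u ∘ₗ ψ := by
    apply LinearMap.ext; intro z
    show ptc p (z 0 • x) = ptc p (z 0 • y)
    rw [map_smul, map_smul]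
    show z 0 • ptc p x = z 0 • ptc p y
    rw [hxy]
  obtain ⟨k, t, v, hvt, hteq⟩ := keyLemma hflat φ ψ p.w.u hu
  have htxy : t x = t y := by
    have := congrArg (fun f => f (fun _ => (1:A))) (congrArg DFunLike.coe hteq)
    simp only [LinearMap.coe_comp, Function.comp_apply] at this
    show t x = t y
    have hx1 : φ (fun _ => (1:A)) = x := by show (1:A) • x = x; rw [one_smul]
    have hy1 : ψ (fun _ => (1:A)) = y := by show (1:A) • y = y; rw [one_smul]
    rw [hx1, hy1] at this
    exact this
  set b : Obj A M := ⟨0, k, v⟩ with hb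
  set f0 : Mor A M := ⟨p.w, b, t⟩ with hf0
  have hf0good : f0.Good := hvt
  obtain ⟨q, hq⟩ := mkPt hflat (p.S ∪ {f0}) (p.fin.union (Set.finite_singleton _))
    (by rintro f (hf | rfl); exacts [p.good f hf, hf0good])
  have hpq : p ≤ q := Set.Subset.trans Set.subset_union_left hq
  have hf0q : f0 ∈ q.S := hq (Or.inr rfl)
  have hcoc := q.coc f0 hf0q
  -- q.h b ∘ₗ t = q.h p.w
  refine ⟨q, hpq, ?_⟩
  have e1 := congrArg (fun f => f x) (congrArg DFunLike.coe hcoc)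
  have e2 := congrArg (fun f => f y) (congrArg DFunLike.coe hcoc)
  replace e1 : q.h b (t x) = q.h p.w x := e1
  replace e2 : q.h b (t y) = q.h p.w y := e2
  show q.h p.w x = q.h p.w y
  rw [← e1, ← e2]
  show q.h b (t x) = q.h b (t y)
  rw [htxy]

theorem flat_isColim (hflat : TensorFlat A M) : IsFilteredColimFinFree A M := by
  refine ⟨Pt A M, inferInstance, pt_nonempty hflat, pt_directed hflat,
    ptn, ptT, ptc, ptT_id, ptT_comp, ptc_comp, ?_, ?_⟩
  · intro m
    obtain ⟨p, y, hy⟩ := pt_surj hflat m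
    exact ⟨p, y, hy⟩
  · intro p x y hxy
    exact pt_det hflat p x y hxy

theorem colim_flat (hcolim : IsFilteredColimFinFree A M) : TensorFlat A M := by
  obtain ⟨ι, inst, hne, hdir, n, T, c, hTid, hTcomp, hcc, hsurj, hdet⟩ := hcolim
  exact sys_flat (@Sys.mk A _ M _ _ ι inst hne hdir n T c hTid hTcomp hcc hsurj hdet)

end
end Stmt12Aux

/-- Over a commutative semiring, every finitely presented flat
semimodule is projective, and (Lazard) a semimodule is flat iff it is a filtered
colimit of finite free semimodules. -/
theorem stmt12 (A : Type) [CommSemiring A] (M : Type) [AddCommMonoid M]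
    [Module A M] :
    (IsFPSemimodule A M → TensorFlat A M → IsProjSemimodule A M) ∧
    (TensorFlat A M ↔ IsFilteredColimFinFree A M) := by
  refine ⟨fun hfp hflat => Stmt12Aux.fp_flat_proj hfp hflat,
    fun hflat => Stmt12Aux.flat_isColim hflat,
    fun hcolim => Stmt12Aux.colim_flat hcolim⟩
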